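/- Let g_1 ≠ g_2 be distinct monic irreducible polynomials in F_q[X] with nonzero constant terms and let b_1, b_2 ≥ 1. Let u_1, u_1' ∈ Ω(g_1^{b_1}) and u_2, u_2' ∈ Ω(g_2^{b_2}), and let ℓ_1, ℓ_2, ℓ_1', ℓ_2' ≥ 0. If L^{ℓ_1} u_1 + L^{ℓ_2} u_2 = L^{ℓ_1'} u_1' + L^{ℓ_2'} u_2', then L^{ℓ_1} u_1 = L^{ℓ_1'} u_1' and L^{ℓ_2} u_2 = L^{ℓ_2'} u_2'. Consequently, if u_1 and u_1' are shift inequivalent, or u_2 and u_2' are shift inequivalent, then u_1 + L^{a} u_2 and u_1' + L^{b} u_2' are shift inequivalent for all a, b ≥ 0. -/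

import Mathlib

open Polynomial

/-- The (left) shift operator `L` on sequences over `F`, as an `F`-linear endomorphism. -/
def shiftL (F : Type*) [CommSemiring F] : Module.End F (ℕ → F) where
  toFun s := fun i => s (i + 1)
  map_add' _ _ := rfl
  map_smul' _ _ := rfl

/-- For a polynomial `f`, the operator `f(L)` on sequences. -/
noncomputable def polyL {F : Type*} [CommSemiring F] (f : Polynomial F) :
    Module.End F (ℕ → F) :=
  Polynomial.aeval (shiftL F) f

/-- `Ω(f)`: the set of sequences annihilated by `f(L)`. -/
def OmegaSet {F : Type*} [CommSemiring F] (f : Polynomial F) : Set (ℕ → F) :=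
  {s | polyL f s = 0}

/-- Two sequences are shift equivalent if one is a shift of the other. -/
def ShiftEquiv {F : Type*} [CommSemiring F] (s s' : ℕ → F) : Prop :=
  ∃ ℓ : ℕ, s' = (shiftL F ^ ℓ) s

/-- The cycle (shift-equivalence class) of a sequence. -/
def seqCycle {F : Type*} [CommSemiring F] (s : ℕ → F) : Set (ℕ → F) :=
  {s' | ∃ ℓ : ℕ, s' = (shiftL F ^ ℓ) s}

/-- `N` is the least period of the sequence `s`. -/
def IsLeastPeriod {F : Type*} (s : ℕ → F) (N : ℕ) : Prop :=
  0 < N ∧ (∀ i, s (i + N) = s i) ∧ ∀ M : ℕ, 0 < M → (∀ i, s (i + M) = s i) → N ≤ M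

/-- `h` is the minimal polynomial of the sequence `s`: it is monic, annihilates `s`,
and divides every polynomial annihilating `s`. -/
def IsMinPolyOfSeq {F : Type*} [CommSemiring F] (s : ℕ → F) (h : Polynomial F) : Prop :=
  h.Monic ∧ polyL h s = 0 ∧ ∀ h' : Polynomial F, polyL h' s = 0 → h ∣ h'

/-- `e = ord(f)`: the least `N ≥ 1` with `f ∣ X^N - 1`. -/
def IsOrderOf {F : Type*} [CommRing F] (f : Polynomial F) (e : ℕ) : Prop :=
  0 < e ∧ f ∣ X ^ e - 1 ∧ ∀ N : ℕ, 0 < N → f ∣ X ^ N - 1 → e ≤ N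


section Aux

variable {F : Type*} [Field F]

lemma shift_pow_eq (k : ℕ) : (shiftL F) ^ k = polyL (X ^ k : Polynomial F) := by
  simp [polyL, map_pow]

lemma polyL_shift (f : Polynomial F) (k : ℕ) (s : ℕ → F) (hs : polyL f s = 0) :
    polyL f (((shiftL F) ^ k) s) = 0 := by
  rw [shift_pow_eq]
  have : polyL f * polyL (X ^ k : Polynomial F) = polyL (X ^ k : Polynomial F) * polyL f := by
    simp only [polyL, ← map_mul]
    rw [mul_comm]
  calc polyL f (polyL (X ^ k : Polynomial F) s)
      = (polyL f * polyL (X ^ k : Polynomial F)) s := rfl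
    _ = (polyL (X ^ k : Polynomial F) * polyL f) s := by rw [this]
    _ = polyL (X ^ k : Polynomial F) (polyL f s) := rfl
    _ = 0 := by rw [hs]; simp

lemma coprime_kills {f g : Polynomial F} (h : IsCoprime f g) {s : ℕ → F}
    (hf : polyL f s = 0) (hg : polyL g s = 0) : s = 0 := by
  obtain ⟨a, b, hab⟩ := h
  have : polyL (a * f + b * g) s = s := by rw [hab]; simp [polyL]
  rw [← this]
  have hadd : polyL (a * f + b * g) = polyL (a * f) + polyL (b * g) := by
    simp [polyL, map_add]
  have h1 : polyL (a * f) s = 0 := by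
    have : polyL (a * f) = polyL a * polyL f := by simp [polyL, map_mul]
    rw [this]; show polyL a (polyL f s) = 0; rw [hf]; simp
  have h2 : polyL (b * g) s = 0 := by
    have : polyL (b * g) = polyL b * polyL g := by simp [polyL, map_mul]
    rw [this]; show polyL b (polyL g s) = 0; rw [hg]; simp
  rw [hadd]
  show polyL (a * f) s + polyL (b * g) s = 0
  rw [h1, h2, add_zero]

lemma periodic_of_dvd {f : Polynomial F} {N : ℕ} (hdvd : f ∣ X ^ N - 1) {s : ℕ → F}
    (hs : polyL f s = 0) : ((shiftL F) ^ N) s = s := by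
  obtain ⟨c, hc⟩ := hdvd
  have h0 : polyL (X ^ N - 1 : Polynomial F) s = 0 := by
    rw [hc, mul_comm]
    have : polyL (c * f) = polyL c * polyL f := by simp [polyL, map_mul]
    rw [this]; show polyL c (polyL f s) = 0; rw [hs]; simp
  have : polyL (X ^ N - 1 : Polynomial F) s = ((shiftL F) ^ N) s - s := by
    simp [polyL, map_sub, map_pow]
  rw [this] at h0
  exact sub_eq_zero.mp h0

lemma periodic_mul {f : Polynomial F} {N : ℕ} (hdvd : f ∣ X ^ N - 1) {s : ℕ → F}
    (hs : polyL f s = 0) (k : ℕ) : ((shiftL F) ^ (k * N)) s = s := by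
  induction k with
  | zero => simp
  | succ k ih =>
      have : (shiftL F) ^ ((k + 1) * N) = (shiftL F) ^ (k * N) * (shiftL F) ^ N := by
        rw [← pow_add]; ring_nf
      rw [this]
      show ((shiftL F) ^ (k * N)) (((shiftL F) ^ N) s) = s
      rw [periodic_of_dvd hdvd hs, ih]

lemma exists_order [Fintype F] (f : Polynomial F) (hmo : f.Monic) (h0 : f.coeff 0 ≠ 0) :
    ∃ N : ℕ, 0 < N ∧ f ∣ X ^ N - 1 := by
  have hcop : IsCoprime (X : Polynomial F) f := by
    refine (Polynomial.irreducible_X.coprime_iff_not_dvd).2 ?_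
    rw [Polynomial.X_dvd_iff]; exact h0
  haveI : Fintype (AdjoinRoot f) := Module.fintypeOfFintype (AdjoinRoot.powerBasis' hmo).basis
  have hu : IsUnit (AdjoinRoot.mk f X) := by
    obtain ⟨a, b, hab⟩ := hcop
    refine IsUnit.of_mul_eq_one (AdjoinRoot.mk f a) ?_
    have := congrArg (AdjoinRoot.mk f) hab
    simpa [map_add, map_mul, AdjoinRoot.mk_self, mul_comm] using this
  obtain ⟨u, hu⟩ := hu
  refine ⟨orderOf u, orderOf_pos u, ?_⟩
  rw [← AdjoinRoot.mk_eq_zero (f := f)] -- hope this lemma name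
  have : (AdjoinRoot.mk f) (X ^ orderOf u - 1) = (u : AdjoinRoot f) ^ orderOf u - 1 := by
    simp [map_sub, map_pow, hu]
  rw [this]
  have := pow_orderOf_eq_one u
  have h2 : ((u ^ orderOf u : (AdjoinRoot f)ˣ) : AdjoinRoot f) = 1 := by rw [this]; rfl
  rw [Units.val_pow_eq_pow_val] at h2
  rw [h2, sub_self]

end Aux

/-- sums of shifts of sequences from `Ω(g₁^{b₁})` and `Ω(g₂^{b₂})`
(for distinct irreducibles `g₁ ≠ g₂`) are equal only componentwise; consequently shift
inequivalence of a component forces shift inequivalence of the sums. -/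
theorem stmt12 {F : Type*} [Field F] [Fintype F]
    (g₁ g₂ : Polynomial F) (hm₁ : g₁.Monic) (hm₂ : g₂.Monic)
    (hirr₁ : Irreducible g₁) (hirr₂ : Irreducible g₂)
    (hg₁0 : g₁.coeff 0 ≠ 0) (hg₂0 : g₂.coeff 0 ≠ 0) (hne : g₁ ≠ g₂)
    (b₁ b₂ : ℕ) (hb₁ : 1 ≤ b₁) (hb₂ : 1 ≤ b₂)
    (u₁ u₁' u₂ u₂' : ℕ → F)
    (hu₁ : u₁ ∈ OmegaSet (g₁ ^ b₁)) (hu₁' : u₁' ∈ OmegaSet (g₁ ^ b₁))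
    (hu₂ : u₂ ∈ OmegaSet (g₂ ^ b₂)) (hu₂' : u₂' ∈ OmegaSet (g₂ ^ b₂)) :
    (∀ ℓ₁ ℓ₂ ℓ₁' ℓ₂' : ℕ,
      (shiftL F ^ ℓ₁) u₁ + (shiftL F ^ ℓ₂) u₂
        = (shiftL F ^ ℓ₁') u₁' + (shiftL F ^ ℓ₂') u₂' →
      (shiftL F ^ ℓ₁) u₁ = (shiftL F ^ ℓ₁') u₁' ∧
        (shiftL F ^ ℓ₂) u₂ = (shiftL F ^ ℓ₂') u₂') ∧
    ((¬ ShiftEquiv u₁ u₁' ∨ ¬ ShiftEquiv u₂ u₂') →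
      ∀ a b : ℕ, ¬ ShiftEquiv (u₁ + (shiftL F ^ a) u₂) (u₁' + (shiftL F ^ b) u₂')) := by
  classical
  -- coprimality of the two powers
  have hnd : ¬ g₁ ∣ g₂ := by
    intro h
    obtain ⟨c, hc⟩ := h
    rcases hirr₂.isUnit_or_isUnit hc with h' | h'
    · exact hirr₁.not_isUnit h'
    · exact hne (Polynomial.eq_of_monic_of_associated hm₁ hm₂ ⟨h'.unit, by rw [hc, h'.unit_spec]⟩)
  have hcop : IsCoprime (g₁ ^ b₁) (g₂ ^ b₂) :=
    ((hirr₁.coprime_iff_not_dvd).2 hnd).pow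
  have hu₁m : polyL (g₁ ^ b₁) u₁ = 0 := hu₁
  have hu₁'m : polyL (g₁ ^ b₁) u₁' = 0 := hu₁'
  have hu₂m : polyL (g₂ ^ b₂) u₂ = 0 := hu₂
  have hu₂'m : polyL (g₂ ^ b₂) u₂' = 0 := hu₂'
  have key : ∀ ℓ₁ ℓ₂ ℓ₁' ℓ₂' : ℕ,
      (shiftL F ^ ℓ₁) u₁ + (shiftL F ^ ℓ₂) u₂
        = (shiftL F ^ ℓ₁') u₁' + (shiftL F ^ ℓ₂') u₂' →
      (shiftL F ^ ℓ₁) u₁ = (shiftL F ^ ℓ₁') u₁' ∧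
        (shiftL F ^ ℓ₂) u₂ = (shiftL F ^ ℓ₂') u₂' := by
    intro ℓ₁ ℓ₂ ℓ₁' ℓ₂' heq
    have hd : (shiftL F ^ ℓ₁) u₁ - (shiftL F ^ ℓ₁') u₁'
        = (shiftL F ^ ℓ₂') u₂' - (shiftL F ^ ℓ₂) u₂ := by
      rw [sub_eq_sub_iff_add_eq_add]
      exact heq.trans (add_comm _ _)
    have h1 : polyL (g₁ ^ b₁) ((shiftL F ^ ℓ₁) u₁ - (shiftL F ^ ℓ₁') u₁') = 0 := by
      rw [map_sub, polyL_shift _ _ _ hu₁m, polyL_shift _ _ _ hu₁'m, sub_zero]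
    have h2 : polyL (g₂ ^ b₂) ((shiftL F ^ ℓ₁) u₁ - (shiftL F ^ ℓ₁') u₁') = 0 := by
      rw [hd, map_sub, polyL_shift _ _ _ hu₂'m, polyL_shift _ _ _ hu₂m, sub_zero]
    have hz := coprime_kills hcop h1 h2
    constructor
    · exact sub_eq_zero.mp hz
    · have := hd.symm.trans hz
      exact (sub_eq_zero.mp this).symm
  refine ⟨key, ?_⟩
  rintro hne2 a b ⟨ℓ, hse⟩
  have hsplit : (shiftL F ^ ℓ) (u₁ + (shiftL F ^ a) u₂)
      = (shiftL F ^ ℓ) u₁ + (shiftL F ^ (ℓ + a)) u₂ := by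
    rw [map_add, pow_add]; rfl
  have heq : (shiftL F ^ ℓ) u₁ + (shiftL F ^ (ℓ + a)) u₂
      = (shiftL F ^ 0) u₁' + (shiftL F ^ b) u₂' := by
    rw [pow_zero, ← hsplit, ← hse]; rfl
  obtain ⟨e1, e2⟩ := key ℓ (ℓ + a) 0 b heq
  rcases hne2 with h | h
  · refine h ⟨ℓ, ?_⟩
    rw [e1, pow_zero]; rfl
  · apply h
    have h20 : (g₂ ^ b₂).coeff 0 ≠ 0 := by
      rw [Polynomial.coeff_zero_eq_eval_zero, eval_pow]
      exact pow_ne_zero _ (by rwa [← Polynomial.coeff_zero_eq_eval_zero])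
    obtain ⟨N, hN, hdvd⟩ := exists_order (g₂ ^ b₂) (hm₂.pow _) h20
    obtain ⟨N', rfl⟩ : ∃ N', N = N' + 1 := ⟨N - 1, by omega⟩
    refine ⟨b * N' + (ℓ + a), ?_⟩
    have hstep : (shiftL F ^ (b * N' + (ℓ + a))) u₂
        = (shiftL F ^ (b * N')) ((shiftL F ^ (ℓ + a)) u₂) := by
      rw [pow_add]; rfl
    rw [hstep, e2]
    have hbn : (shiftL F ^ (b * N')) ((shiftL F ^ b) u₂') = (shiftL F ^ (b * (N' + 1))) u₂' := by
      rw [← Module.End.mul_apply, ← pow_add]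
      have he : b * N' + b = b * (N' + 1) := by ring
      rw [he]
    rw [hbn, periodic_mul hdvd hu₂'m b]
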